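/- Let f : C → ℝ be convex on a convex set C in a real vector space, let x₁,…,xₙ ∈ C, and let p, q be probability weight vectors with qᵢ > 0 for each i. Then max_i (pᵢ/qᵢ) · J(f,x,q) ≥ J(f,x,p) ≥ min_i (pᵢ/qᵢ) · J(f,x,q), where J(f,x,r) = Σ rᵢ f(xᵢ) − f(Σ rᵢ xᵢ). -/

import Mathlib

private lemma lemA {E : Type*} [AddCommGroup E] [Module ℝ E] {C : Set E} {f : E → ℝ}
    (hC : Convex ℝ C) (hf : ConvexOn ℝ C f) {n : ℕ}
    (x : Fin n → E) (hx : ∀ i, x i ∈ C)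
    (p q : Fin n → ℝ) (hp : ∀ i, 0 ≤ p i)
    (hp1 : ∑ i, p i = 1) (hq1 : ∑ i, q i = 1)
    {M : ℝ} (hM : ∀ i, p i ≤ M * q i) :
    ∑ i, p i * f (x i) - f (∑ i, p i • x i) ≤
      M * (∑ i, q i * f (x i) - f (∑ i, q i • x i)) := by
  have hM1 : 1 ≤ M := by
    have h := Finset.sum_le_sum (s := Finset.univ) (fun i _ => hM i)
    rw [← Finset.mul_sum, hp1, hq1, mul_one] at h
    exact h
  rcases eq_or_lt_of_le hM1 with hMe | hMlt
  · have hpq : ∀ i, p i = q i := by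
      have hs : ∑ i, (q i - p i) = 0 := by
        rw [Finset.sum_sub_distrib, hp1, hq1, sub_self]
      have hnn : ∀ i ∈ Finset.univ, 0 ≤ q i - p i := fun i _ => by
        have := hM i; rw [← hMe, one_mul] at this; linarith
      intro i
      have := (Finset.sum_eq_zero_iff_of_nonneg hnn).1 hs i (Finset.mem_univ i)
      linarith
    have hfp : p = q := funext hpq
    subst hfp
    rw [← hMe, one_mul]
  · have hM0 : (0:ℝ) < M := by linarith
    have hM1' : (0:ℝ) < M - 1 := by linarith
    set r : Fin n → ℝ := fun i => (M * q i - p i) / (M - 1) with hr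
    have hr0 : ∀ i ∈ Finset.univ, 0 ≤ r i := fun i _ =>
      div_nonneg (by have := hM i; linarith) (le_of_lt hM1')
    have hr1 : ∑ i, r i = 1 := by
      rw [hr, ← Finset.sum_div, Finset.sum_sub_distrib, ← Finset.mul_sum, hp1, hq1,
        mul_one]
      field_simp
    have ha : ∑ i, p i • x i ∈ C :=
      hC.sum_mem (fun i _ => hp i) hp1 (fun i _ => hx i)
    have hy : ∑ i, r i • x i ∈ C := hC.sum_mem hr0 hr1 (fun i _ => hx i)
    have hJy : f (∑ i, r i • x i) ≤ ∑ i, r i * f (x i) :=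
      hf.map_sum_le hr0 hr1 (fun i _ => hx i)
    have hcv := hf.2 ha hy (le_of_lt (by positivity : (0:ℝ) < 1/M))
      (le_of_lt (div_pos hM1' hM0)) (by field_simp; ring)
    have hid : (1/M) • (∑ i, p i • x i) + ((M-1)/M) • (∑ i, r i • x i)
        = ∑ i, q i • x i := by
      rw [Finset.smul_sum, Finset.smul_sum, ← Finset.sum_add_distrib]
      refine Finset.sum_congr rfl fun i _ => ?_
      rw [smul_smul, smul_smul, ← add_smul]
      congr 1
      rw [hr]
      field_simp
      ring
    rw [hid] at hcv
    simp only [smul_eq_mul] at hcv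
    have hcv2 : f (∑ i, q i • x i) ≤
        1/M * f (∑ i, p i • x i) + (M-1)/M * ∑ i, r i * f (x i) := by
      refine hcv.trans ?_
      gcongr
    have hrsum : (M - 1) * ∑ i, r i * f (x i)
        = M * (∑ i, q i * f (x i)) - ∑ i, p i * f (x i) := by
      rw [Finset.mul_sum, Finset.mul_sum, ← Finset.sum_sub_distrib]
      refine Finset.sum_congr rfl fun i _ => ?_
      rw [hr]
      field_simp
    have := mul_le_mul_of_nonneg_left hcv2 hM0.le
    have hMne : M ≠ 0 := ne_of_gt hM0
    have hMM : M * ((M-1)/M) = M - 1 := by field_simp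
    rw [mul_add, ← mul_assoc, ← mul_assoc, mul_one_div_cancel hMne, one_mul, hMM] at this
    nlinarith [this, hrsum]

theorem stmt_2 {E : Type*} [AddCommGroup E] [Module ℝ E] {C : Set E} {f : E → ℝ}
    (hC : Convex ℝ C) (hf : ConvexOn ℝ C f) {n : ℕ} (hn : 0 < n)
    (x : Fin n → E) (hx : ∀ i, x i ∈ C)
    (p q : Fin n → ℝ) (hp : ∀ i, 0 ≤ p i) (hq : ∀ i, 0 < q i)
    (hp1 : ∑ i, p i = 1) (hq1 : ∑ i, q i = 1) :
    (⨆ i, p i / q i) * (∑ i, q i * f (x i) - f (∑ i, q i • x i)) ≥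
        ∑ i, p i * f (x i) - f (∑ i, p i • x i) ∧
      ∑ i, p i * f (x i) - f (∑ i, p i • x i) ≥
        (⨅ i, p i / q i) * (∑ i, q i * f (x i) - f (∑ i, q i • x i)) := by
  haveI : Nonempty (Fin n) := ⟨⟨0, hn⟩⟩
  have hbdd : BddAbove (Set.range fun i => p i / q i) :=
    (Set.finite_range _).bddAbove
  have hbddb : BddBelow (Set.range fun i => p i / q i) :=
    (Set.finite_range _).bddBelow
  constructor
  · have hM : ∀ i, p i ≤ (⨆ i, p i / q i) * q i := fun i => by
      have h := le_ciSup hbdd i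
      calc p i = (p i / q i) * q i := (div_mul_cancel₀ _ (hq i).ne').symm
        _ ≤ (⨆ i, p i / q i) * q i :=
          mul_le_mul_of_nonneg_right h (hq i).le
    exact lemA hC hf x hx p q hp hp1 hq1 hM
  · set m := ⨅ i, p i / q i with hm
    have hm0 : 0 ≤ m := le_ciInf fun i => div_nonneg (hp i) (hq i).le
    have hmi : ∀ i, m * q i ≤ p i := fun i => by
      have h := ciInf_le hbddb i
      calc m * q i ≤ (p i / q i) * q i :=
          mul_le_mul_of_nonneg_right h (hq i).le
        _ = p i := div_mul_cancel₀ _ (hq i).ne'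
    rcases eq_or_lt_of_le hm0 with hme | hmlt
    · have hJ : 0 ≤ ∑ i, p i * f (x i) - f (∑ i, p i • x i) := by
        have := hf.map_sum_le (fun i _ => hp i) hp1 (fun i _ => hx i)
        simp only [smul_eq_mul] at this
        linarith
      rw [← hme, zero_mul]
      exact hJ
    · have hM : ∀ i, q i ≤ (1/m) * p i := fun i => by
        rw [div_mul_eq_mul_div, le_div_iff₀ hmlt]
        have := hmi i; nlinarith
      have := lemA hC hf x hx q p (fun i => (hq i).le) hq1 hp1 hM
      have hmm := mul_le_mul_of_nonneg_left this hmlt.le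
      rw [← mul_assoc, mul_one_div_cancel (ne_of_gt hmlt), one_mul] at hmm
      exact hmm
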